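/- Let x be a fixed point of a conjunctive map F (F(x) = x) with θ = 1/2 and nonnegative coordinates in [0,1]^N. If x_i < 1/2 for some i, then for every j with i ∈ I_j we have x_j < 1/2. Consequently, if the wiring diagram (edges k → j when k ∈ I_j) is strongly connected and x_i < 1/2 for some i, then x_k < 1/2 for all k. -/
import Mathlib


/-- Let x ∈ [0,1]^N be a fixed point of a conjunctive map F with θ = 1/2.
If x_i < 1/2 for some i, then x_j < 1/2 for every j with i ∈ I_j. Consequently, if the
wiring diagram (edge k → j when k ∈ I_j) is strongly connected, then x_k < 1/2 for all k. -/
theorem fixed_point_low_propagates (n N : ℕ) (hn : 1 ≤ n) (hN : 1 ≤ N)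
    (I : Fin N → Finset (Fin N)) (hI : ∀ j, (I j).Nonempty)
    (F : (Fin N → ℝ) → Fin N → ℝ)
    (hF : ∀ x j, F x j = ∏ k ∈ I j, (x k) ^ n / ((1 / 2 : ℝ) ^ n + (x k) ^ n))
    (x : Fin N → ℝ) (hx : ∀ k, x k ∈ Set.Icc (0 : ℝ) 1) (hfix : F x = x)
    (i : Fin N) (hi : x i < 1 / 2) :
    (∀ j, i ∈ I j → x j < 1 / 2) ∧
    ((∀ a b : Fin N, Relation.ReflTransGen (fun u v => u ∈ I v) a b) →
      ∀ k, x k < 1 / 2) := by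
  have hden : ∀ k : Fin N, 0 < (1 / 2 : ℝ) ^ n + (x k) ^ n := by
    intro k
    have : (0:ℝ) < (1/2:ℝ)^n := by positivity
    have hx0 : 0 ≤ x k := (hx k).1
    nlinarith [pow_nonneg hx0 n]
  have hf0 : ∀ k : Fin N, 0 ≤ (x k) ^ n / ((1 / 2 : ℝ) ^ n + (x k) ^ n) := by
    intro k
    exact div_nonneg (pow_nonneg (hx k).1 n) (hden k).le
  have hf1 : ∀ k : Fin N, (x k) ^ n / ((1 / 2 : ℝ) ^ n + (x k) ^ n) ≤ 1 := by
    intro k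
    rw [div_le_one (hden k)]
    have : (0:ℝ) < (1/2:ℝ)^n := by positivity
    linarith
  have key : ∀ i : Fin N, x i < 1 / 2 → ∀ j, i ∈ I j → x j < 1 / 2 := by
    intro i hi j hij
    have hfi : (x i) ^ n / ((1 / 2 : ℝ) ^ n + (x i) ^ n) < 1 / 2 := by
      have hlt : (x i) ^ n < (1/2:ℝ) ^ n := by
        exact pow_lt_pow_left₀ hi (hx i).1 (by omega)
      rw [div_lt_iff₀ (hden i)]
      nlinarith
    have hxj : x j = ∏ k ∈ I j, (x k) ^ n / ((1 / 2 : ℝ) ^ n + (x k) ^ n) := by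
      rw [← hF x j, hfix]
    have hprod : (∏ k ∈ I j, (x k) ^ n / ((1 / 2 : ℝ) ^ n + (x k) ^ n)) ≤
        (x i) ^ n / ((1 / 2 : ℝ) ^ n + (x i) ^ n) := by
      rw [← Finset.mul_prod_erase _ _ hij]
      exact mul_le_of_le_one_right (hf0 i)
        (Finset.prod_le_one (fun k _ => hf0 k) (fun k _ => hf1 k))
    calc x j ≤ _ := hxj ▸ hprod
      _ < 1/2 := hfi
  refine ⟨key i hi, fun hsc k => ?_⟩
  have h := hsc i k
  induction h with
  | refl => exact hi
  | tail hab hbc ih => exact key _ ih _ hbc
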